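/- Let X be a streak and a, b ∈ X. The following are equivalent: (1) a = b; (2) for all q ∈ ℚ, q < a ⟺ q < b; (3) for all q ∈ ℚ, a < q ⟺ b < q; (4) for all q ∈ ℚ, q < a implies q < b and a < q implies b < q. -/
import Mathlib


/-- A prestreak: a strict order (asymmetric and cotransitive) together with a
commutative additive monoid structure and a commutative multiplicative monoid
structure on the positive part, compatible with the order.  (The intrinsic
topology conditions of the paper are omitted, being vacuous in the classical
set-theoretic setting.) -/
structure Prestreak (X : Type*) where
  lt : X → X → Prop
  add : X → X → X
  zero : X
  mul : X → X → X
  one : X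
  lt_asymm : ∀ a b, ¬ (lt a b ∧ lt b a)
  lt_cotrans : ∀ a b x, lt a b → lt a x ∨ lt x b
  add_comm : ∀ a b, add a b = add b a
  add_assoc : ∀ a b c, add (add a b) c = add a (add b c)
  add_zero : ∀ a, add a zero = a
  zero_lt_one : lt zero one
  mul_pos : ∀ a b, lt zero a → lt zero b → lt zero (mul a b)
  mul_comm : ∀ a b, lt zero a → lt zero b → mul a b = mul b a
  mul_assoc : ∀ a b c, lt zero a → lt zero b → lt zero c →
    mul (mul a b) c = mul a (mul b c)
  mul_one : ∀ a, lt zero a → mul a one = a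
  mul_add : ∀ a b c, lt zero a → lt zero b → lt zero c →
    mul (add a b) c = add (mul a c) (mul b c)
  add_lt_add_iff : ∀ a b x, (lt (add a x) (add b x) ↔ lt a b)
  mul_lt_mul_iff : ∀ a b x, lt zero a → lt zero b → lt zero x →
    (lt (mul a x) (mul b x) ↔ lt a b)

namespace Prestreak

variable {X : Type*}

/-- Multiplication by a natural number: `0·a = 0`, `(n+1)·a = n·a + a`. -/
def nsmul (P : Prestreak X) : ℕ → X → X
  | 0, _ => P.zero
  | n + 1, a => P.add (nsmul P n a) a

/-- The canonical image of a natural number, `n ↦ n·1`. -/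
def ofNat (P : Prestreak X) (n : ℕ) : X := P.nsmul n P.one

/-- Comparison `x < q` of an element of a prestreak with a rational number,
using the canonical representation `q = (q.num⁺ − q.num⁻)/q.den`:
`x < (a−b)/c  :=  c·x + b < a`. -/
def ltQ (P : Prestreak X) (x : X) (q : ℚ) : Prop :=
  P.lt (P.add (P.nsmul q.den x) (P.ofNat ((-q.num).toNat))) (P.ofNat q.num.toNat)

/-- Comparison `q < x` of a rational with an element of a prestreak:
`(a−b)/c < x  :=  a < c·x + b`. -/
def qLt (P : Prestreak X) (q : ℚ) (x : X) : Prop :=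
  P.lt (P.ofNat q.num.toNat) (P.add (P.nsmul q.den x) (P.ofNat ((-q.num).toNat)))

/-- The archimedean property for prestreaks. -/
def Archimedean (P : Prestreak X) : Prop :=
  ∀ a b c d : X, P.lt b d →
    ∃ n : ℕ, P.lt (P.add a (P.nsmul n b)) (P.add c (P.nsmul n d))

/-- Tightness: antisymmetry of `≤` (where `a ≤ b := ¬ b < a`).
A streak is a tight archimedean prestreak. -/
def Tight (P : Prestreak X) : Prop :=
  ∀ a b : X, ¬ P.lt a b → ¬ P.lt b a → a = b

/-- The apartness relation `a # b := a < b ∨ b < a`. -/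
def Apart (P : Prestreak X) (a b : X) : Prop := P.lt a b ∨ P.lt b a

/-- A morphism of prestreaks: preserves `<`, `+`, `0`, `1` and products of
positive elements. -/
def IsHom {Y : Type*} (P : Prestreak X) (Q : Prestreak Y) (f : X → Y) : Prop :=
  (∀ a b, P.lt a b → Q.lt (f a) (f b)) ∧
  (∀ a b, f (P.add a b) = Q.add (f a) (f b)) ∧
  f P.zero = Q.zero ∧ f P.one = Q.one ∧
  (∀ a b, P.lt P.zero a → P.lt P.zero b → f (P.mul a b) = Q.mul (f a) (f b))

/-- A multiplicative structure on a prestreak: a total multiplication which is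
commutative, associative, distributes over addition, has unit `1`, restricts to
the given multiplication on positive elements, and satisfies the multiplicity
condition. -/
def IsMultiplicative (P : Prestreak X) (tmul : X → X → X) : Prop :=
  (∀ a b, tmul a b = tmul b a) ∧
  (∀ a b c, tmul (tmul a b) c = tmul a (tmul b c)) ∧
  (∀ a b c, tmul (P.add a b) c = P.add (tmul a c) (tmul b c)) ∧
  (∀ a, tmul a P.one = a) ∧
  (∀ a b, P.lt P.zero a → P.lt P.zero b → tmul a b = P.mul a b) ∧
  (∀ a b c d, P.lt b a → P.lt d c →
    P.lt (P.add (tmul a d) (tmul b c)) (P.add (tmul a c) (tmul b d)))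

end Prestreak


namespace Prestreak

variable {X : Type*} (P : Prestreak X)

lemma my_asymm {a b : X} (h : P.lt a b) : ¬ P.lt b a := fun h' => P.lt_asymm a b ⟨h, h'⟩

lemma my_lt_trans {a b c : X} (h1 : P.lt a b) (h2 : P.lt b c) : P.lt a c := by
  rcases P.lt_cotrans a b c h1 with h | h
  · exact h
  · exact absurd h (P.my_asymm h2)

lemma my_le_lt_trans {a b c : X} (h1 : ¬ P.lt b a) (h2 : P.lt b c) : P.lt a c := by
  rcases P.lt_cotrans b c a h2 with h | h
  · exact absurd h h1
  · exact h

lemma my_zero_add (a : X) : P.add P.zero a = a := by rw [P.add_comm]; exact P.add_zero a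

lemma my_add_lt_add_left (a b x : X) : P.lt (P.add x a) (P.add x b) ↔ P.lt a b := by
  rw [P.add_comm x a, P.add_comm x b]; exact P.add_lt_add_iff a b x

lemma my_add_lt_add {a b c d : X} (h1 : P.lt a b) (h2 : P.lt c d) :
    P.lt (P.add a c) (P.add b d) :=
  P.my_lt_trans ((P.add_lt_add_iff a b c).2 h1) ((P.my_add_lt_add_left c d b).2 h2)

lemma my_add_pos {a b : X} (h1 : P.lt P.zero a) (h2 : P.lt P.zero b) :
    P.lt P.zero (P.add a b) := by
  have := P.my_add_lt_add h1 h2; rwa [P.my_zero_add] at this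

lemma my_nsmul_zero (n : ℕ) : P.nsmul n P.zero = P.zero := by
  induction n with
  | zero => rfl
  | succ n ih => show P.add _ _ = _; rw [ih, P.add_zero]

lemma my_nsmul_succ (n : ℕ) (a : X) : P.nsmul (n+1) a = P.add (P.nsmul n a) a := rfl

lemma my_nsmul_add_nat (m n : ℕ) (a : X) :
    P.nsmul (m + n) a = P.add (P.nsmul m a) (P.nsmul n a) := by
  induction n with
  | zero => show P.nsmul m a = _; rw [show P.nsmul 0 a = P.zero from rfl, P.add_zero]
  | succ n ih =>
    show P.nsmul ((m + n) + 1) a = _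
    rw [P.my_nsmul_succ, ih, P.my_nsmul_succ, P.add_assoc]

lemma my_nsmul_add (n : ℕ) (a b : X) :
    P.nsmul n (P.add a b) = P.add (P.nsmul n a) (P.nsmul n b) := by
  induction n with
  | zero => show P.zero = P.add P.zero P.zero; rw [P.add_zero]
  | succ n ih =>
    rw [P.my_nsmul_succ, P.my_nsmul_succ, P.my_nsmul_succ, ih]
    rw [P.add_assoc, P.add_assoc]
    congr 1
    rw [← P.add_assoc, P.add_comm (P.nsmul n b) a, P.add_assoc]

lemma my_nsmul_mul (m n : ℕ) (a : X) : P.nsmul (m * n) a = P.nsmul m (P.nsmul n a) := by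
  induction m with
  | zero => rw [Nat.zero_mul]; rfl
  | succ m ih =>
    rw [Nat.succ_mul, P.my_nsmul_add_nat, ih, P.my_nsmul_succ]

lemma my_ofNat_add (m n : ℕ) : P.ofNat (m + n) = P.add (P.ofNat m) (P.ofNat n) :=
  P.my_nsmul_add_nat m n P.one

lemma my_ofNat_mul (m n : ℕ) : P.ofNat (m * n) = P.nsmul m (P.ofNat n) :=
  P.my_nsmul_mul m n P.one

lemma my_ofNat_pos {n : ℕ} (h : 0 < n) : P.lt P.zero (P.ofNat n) := by
  induction n with
  | zero => omega
  | succ n ih =>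
    rcases Nat.eq_zero_or_pos n with rfl | h'
    · show P.lt P.zero (P.add P.zero P.one)
      rw [P.my_zero_add]; exact P.zero_lt_one
    · exact P.my_add_pos (ih h') P.zero_lt_one

lemma my_nsmul_lt_of_lt {a b : X} (h : P.lt a b) (n : ℕ) :
    P.lt (P.nsmul (n+1) a) (P.nsmul (n+1) b) := by
  induction n with
  | zero =>
    show P.lt (P.add P.zero a) (P.add P.zero b)
    rw [P.my_zero_add, P.my_zero_add]; exact h
  | succ n ih => exact P.my_add_lt_add ih h

lemma my_nsmul_lt_cancel : ∀ (n : ℕ) {a b : X},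
    P.lt (P.nsmul n a) (P.nsmul n b) → P.lt a b := by
  intro n
  induction n with
  | zero => intro a b h; exact absurd h (fun h' => P.lt_asymm _ _ ⟨h', h'⟩)
  | succ n ih =>
    intro a b h
    rcases P.lt_cotrans _ _ (P.add (P.nsmul n a) b) h with h' | h'
    · exact (P.my_add_lt_add_left a b (P.nsmul n a)).1 h'
    · exact ih ((P.add_lt_add_iff _ _ b).1 h')

lemma my_nsmul_lt_iff {k : ℕ} (hk : 0 < k) (a b : X) :
    P.lt (P.nsmul k a) (P.nsmul k b) ↔ P.lt a b := by
  constructor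
  · exact P.my_nsmul_lt_cancel k
  · intro h
    obtain ⟨j, rfl⟩ := Nat.exists_eq_add_of_lt hk
    rw [Nat.zero_add]
    exact P.my_nsmul_lt_of_lt h j

lemma my_toNat_mul (k : ℕ) (m : ℤ) : ((k:ℤ) * m).toNat = k * m.toNat := by
  rcases le_or_gt 0 m with h | h
  · lift m to ℕ using h
    rw [← Nat.cast_mul, Int.toNat_natCast, Int.toNat_natCast]
  · rw [Int.toNat_of_nonpos (mul_nonpos_of_nonneg_of_nonpos (Int.natCast_nonneg k) h.le),
      Int.toNat_of_nonpos h.le, Nat.mul_zero]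

/-- `x < m/n` for an integer `m` and positive natural `n`. -/
def LtE (x : X) (m : ℤ) (n : ℕ) : Prop :=
  P.lt (P.add (P.nsmul n x) (P.ofNat ((-m).toNat))) (P.ofNat m.toNat)

/-- `m/n < x` for an integer `m` and positive natural `n`. -/
def ELt (m : ℤ) (n : ℕ) (x : X) : Prop :=
  P.lt (P.ofNat m.toNat) (P.add (P.nsmul n x) (P.ofNat ((-m).toNat)))

lemma my_ltQ_eq (x : X) (q : ℚ) : P.ltQ x q = P.LtE x q.num q.den := rfl

lemma my_qLt_eq (x : X) (q : ℚ) : P.qLt q x = P.ELt q.num q.den x := rfl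

lemma my_scale_aux (x : X) (m : ℤ) (n k : ℕ) :
    (P.add (P.nsmul (k*n) x) (P.ofNat ((-((k:ℤ)*m)).toNat)) =
      P.nsmul k (P.add (P.nsmul n x) (P.ofNat ((-m).toNat)))) ∧
    (P.ofNat (((k:ℤ)*m).toNat) = P.nsmul k (P.ofNat m.toNat)) := by
  constructor
  · rw [← mul_neg, my_toNat_mul, P.my_nsmul_mul, P.my_ofNat_mul, P.my_nsmul_add]
  · rw [my_toNat_mul, P.my_ofNat_mul]

lemma my_LtE_scale (x : X) (m : ℤ) (n k : ℕ) (hk : 0 < k) :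
    P.LtE x ((k:ℤ)*m) (k*n) ↔ P.LtE x m n := by
  unfold LtE
  rw [(P.my_scale_aux x m n k).1, (P.my_scale_aux x m n k).2]
  exact P.my_nsmul_lt_iff hk _ _

lemma my_ELt_scale (x : X) (m : ℤ) (n k : ℕ) (hk : 0 < k) :
    P.ELt ((k:ℤ)*m) (k*n) x ↔ P.ELt m n x := by
  unfold ELt
  rw [(P.my_scale_aux x m n k).1, (P.my_scale_aux x m n k).2]
  exact P.my_nsmul_lt_iff hk _ _

lemma my_LtE_congr (x : X) (m1 : ℤ) (n1 : ℕ) (m2 : ℤ) (n2 : ℕ)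
    (h1 : 0 < n1) (h2 : 0 < n2) (h : m1 * n2 = m2 * n1) :
    P.LtE x m1 n1 ↔ P.LtE x m2 n2 := by
  rw [← P.my_LtE_scale x m1 n1 n2 h2, ← P.my_LtE_scale x m2 n2 n1 h1]
  rw [show (n2:ℤ)*m1 = (n1:ℤ)*m2 by rw [_root_.mul_comm, h, _root_.mul_comm], Nat.mul_comm n2 n1]

lemma my_ELt_congr (x : X) (m1 : ℤ) (n1 : ℕ) (m2 : ℤ) (n2 : ℕ)
    (h1 : 0 < n1) (h2 : 0 < n2) (h : m1 * n2 = m2 * n1) :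
    P.ELt m1 n1 x ↔ P.ELt m2 n2 x := by
  rw [← P.my_ELt_scale x m1 n1 n2 h2, ← P.my_ELt_scale x m2 n2 n1 h1]
  rw [show (n2:ℤ)*m1 = (n1:ℤ)*m2 by rw [_root_.mul_comm, h, _root_.mul_comm], Nat.mul_comm n2 n1]

/-- Density of the rationals in a streak: between any two elements there is a
rational. -/
lemma my_dense (hA : P.Archimedean) {a b : X} (h : P.lt a b) :
    ∃ q : ℚ, P.ltQ a q ∧ P.qLt q b := by
  classical
  obtain ⟨n, hn⟩ := hA P.one a P.zero b h
  rw [P.my_zero_add] at hn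
  have hn0 : 0 < n := by
    rcases Nat.eq_zero_or_pos n with rfl | h'
    · exfalso
      have h1 : P.lt P.one P.zero := by
        have := hn; rw [show P.nsmul 0 a = P.zero from rfl,
          show P.nsmul 0 b = P.zero from rfl, P.add_zero] at this
        exact this
      exact P.lt_asymm _ _ ⟨P.zero_lt_one, h1⟩
    · exact h'
  set c := P.nsmul n a with hc
  obtain ⟨L, hL⟩ := hA P.zero P.zero c P.one P.zero_lt_one
  rw [P.my_zero_add, P.my_nsmul_zero] at hL
  -- hL : P.lt P.zero (P.add c (P.ofNat L))   (after noting nsmul L one = ofNat L)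
  obtain ⟨M, hM⟩ := hA c P.zero P.zero P.one P.zero_lt_one
  rw [P.my_nsmul_zero, P.add_zero, P.my_zero_add] at hM
  -- hM : P.lt c (P.ofNat M)
  set u := P.add c (P.ofNat L) with hu_def
  have hLu : P.lt P.zero u := hL
  have hu : P.lt u (P.ofNat (M + L)) := by
    rw [P.my_ofNat_add]; exact (P.add_lt_add_iff _ _ _).2 hM
  have hex : ∃ m, P.lt u (P.ofNat m) := ⟨M + L, hu⟩
  set m0 := Nat.find hex with hm0def
  have hspec : P.lt u (P.ofNat m0) := Nat.find_spec hex
  have hm0pos : 0 < m0 := by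
    rcases Nat.eq_zero_or_pos m0 with hz | h'
    · exfalso
      rw [hz] at hspec
      exact P.lt_asymm _ _ ⟨hLu, hspec⟩
    · exact h'
  have hmin : ¬ P.lt u (P.ofNat (m0 - 1)) := Nat.find_min hex (by omega)
  set m : ℤ := (m0 : ℤ) - L with hmdef
  have hkey : m0 + (-m).toNat = L + m.toNat := by omega
  have hA1 : P.LtE a m n := by
    unfold LtE
    have h1 : P.lt (P.add u (P.ofNat ((-m).toNat)))
        (P.add (P.ofNat m0) (P.ofNat ((-m).toNat))) := (P.add_lt_add_iff _ _ _).2 hspec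
    rw [← P.my_ofNat_add, hkey, P.my_ofNat_add] at h1
    rw [hu_def, P.add_assoc, P.add_comm (P.ofNat L) (P.ofNat ((-m).toNat)),
      ← P.add_assoc, P.add_comm (P.ofNat L) (P.ofNat m.toNat)] at h1
    exact (P.add_lt_add_iff _ _ _).1 h1
  have hB1 : P.ELt m n b := by
    unfold ELt
    have e : P.ofNat m0 = P.add (P.ofNat (m0 - 1)) P.one := by
      conv_lhs => rw [show m0 = (m0 - 1) + 1 by omega]
      rfl
    have step1 : ¬ P.lt (P.add u P.one) (P.ofNat m0) := by
      rw [e]; intro hh; exact hmin ((P.add_lt_add_iff _ _ _).1 hh)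
    have step2 : P.lt (P.add u P.one) (P.add (P.nsmul n b) (P.ofNat L)) := by
      have h2 : P.lt (P.add (P.add P.one c) (P.ofNat L))
          (P.add (P.nsmul n b) (P.ofNat L)) := (P.add_lt_add_iff _ _ _).2 hn
      have eq1 : P.add u P.one = P.add (P.add P.one c) (P.ofNat L) := by
        rw [hu_def, P.add_assoc, P.add_comm (P.ofNat L) P.one, ← P.add_assoc,
          P.add_comm c P.one]
      rw [eq1]; exact h2
    have step3 : P.lt (P.ofNat m0) (P.add (P.nsmul n b) (P.ofNat L)) :=
      P.my_le_lt_trans step1 step2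
    have h3 : P.lt (P.add (P.ofNat m0) (P.ofNat ((-m).toNat)))
        (P.add (P.add (P.nsmul n b) (P.ofNat L)) (P.ofNat ((-m).toNat))) :=
      (P.add_lt_add_iff _ _ _).2 step3
    rw [← P.my_ofNat_add, hkey, P.my_ofNat_add, P.add_comm (P.ofNat L) (P.ofNat m.toNat),
      P.add_assoc, P.add_comm (P.ofNat L) (P.ofNat ((-m).toNat)), ← P.add_assoc] at h3
    exact (P.add_lt_add_iff _ _ _).1 h3
  -- now build the rational
  set q : ℚ := (m : ℚ) / (n : ℚ) with hqdef
  have hnQ : (n : ℚ) ≠ 0 := by exact_mod_cast hn0.ne'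
  have hdenQ : (q.den : ℚ) ≠ 0 := by exact_mod_cast q.den_nz
  have e1 : (q.num : ℚ) = q * q.den := (div_eq_iff hdenQ).mp (Rat.num_div_den q)
  have e2 : q * (n : ℚ) = (m : ℚ) := div_mul_cancel₀ _ hnQ
  have hcross : q.num * (n : ℤ) = m * (q.den : ℤ) := by
    have h1 : (q.num : ℚ) * (n : ℚ) = (m : ℚ) * (q.den : ℚ) := by
      rw [e1, mul_right_comm, e2]
    exact_mod_cast h1
  refine ⟨q, ?_, ?_⟩
  · rw [P.my_ltQ_eq]
    exact (P.my_LtE_congr a q.num q.den m n q.pos hn0 hcross).mpr hA1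
  · rw [P.my_qLt_eq]
    exact (P.my_ELt_congr b q.num q.den m n q.pos hn0 hcross).mpr hB1

end Prestreak

/-- In a streak, an element is determined by its rational lower bounds, or by
its rational upper bounds. -/
theorem element_determined_by_rational_bounds {X : Type*} (P : Prestreak X)
    (hA : P.Archimedean) (hT : P.Tight) (a b : X) :
    List.TFAE [a = b,
      ∀ q : ℚ, P.qLt q a ↔ P.qLt q b,
      ∀ q : ℚ, P.ltQ a q ↔ P.ltQ b q,
      ∀ q : ℚ, (P.qLt q a → P.qLt q b) ∧ (P.ltQ a q → P.ltQ b q)] := by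
  tfae_have 1 → 2 := by rintro rfl q; exact Iff.rfl
  tfae_have 1 → 3 := by rintro rfl q; exact Iff.rfl
  tfae_have 1 → 4 := by rintro rfl q; exact ⟨id, id⟩
  tfae_have 2 → 1 := by
    intro h2
    apply hT
    · intro hab
      obtain ⟨q, h1, h2'⟩ := P.my_dense hA hab
      exact P.lt_asymm _ _ ⟨h1, (h2 q).mpr h2'⟩
    · intro hba
      obtain ⟨q, h1, h2'⟩ := P.my_dense hA hba
      exact P.lt_asymm _ _ ⟨h1, (h2 q).mp h2'⟩
  tfae_have 3 → 1 := by
    intro h3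
    apply hT
    · intro hab
      obtain ⟨q, h1, h2'⟩ := P.my_dense hA hab
      exact P.lt_asymm _ _ ⟨(h3 q).mp h1, h2'⟩
    · intro hba
      obtain ⟨q, h1, h2'⟩ := P.my_dense hA hba
      exact P.lt_asymm _ _ ⟨(h3 q).mpr h1, h2'⟩
  tfae_have 4 → 1 := by
    intro h4
    apply hT
    · intro hab
      obtain ⟨q, h1, h2'⟩ := P.my_dense hA hab
      exact P.lt_asymm _ _ ⟨(h4 q).2 h1, h2'⟩
    · intro hba
      obtain ⟨q, h1, h2'⟩ := P.my_dense hA hba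
      exact P.lt_asymm _ _ ⟨h1, (h4 q).1 h2'⟩
  tfae_finish
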